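/- The metric space (Y,d) is hyperbolic; moreover, there is a constant Δ depending only on δ (and not on X₁, X₂, B₁, B₂) such that (Y,d) is Δ-hyperbolic. -/

import Mathlib

open Set Metric Filter
open scoped ENNReal NNReal

/-- `γ`, restricted to `[0, dist x y]`, is a unit-speed (arclength-parameterized) geodesic
segment from `x` to `y`. -/
def IsGeodSegment {X : Type*} [MetricSpace X] (γ : ℝ → X) (x y : X) : Prop :=
  γ 0 = x ∧ γ (dist x y) = y ∧
    ∀ s ∈ Set.Icc (0 : ℝ) (dist x y), ∀ t ∈ Set.Icc (0 : ℝ) (dist x y),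
      dist (γ s) (γ t) = |s - t|

/-- A metric space is geodesic if any two points are joined by a geodesic segment. -/
def GeodesicMS (X : Type*) [MetricSpace X] : Prop :=
  ∀ x y : X, ∃ γ : ℝ → X, IsGeodSegment γ x y

/-- The image (side) of a geodesic segment from `x` to `y`. -/
def segImg {X : Type*} [MetricSpace X] (γ : ℝ → X) (x y : X) : Set X :=
  γ '' Set.Icc 0 (dist x y)

/-- `X` is `δ`-hyperbolic: each side of each geodesic triangle is contained in the closed
`δ`-neighborhood of the union of the two other sides.  (Since the vertices `x y z` and the
three sides are universally quantified, the condition for the single side `γ_{xy}` implies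
it for all three sides.) -/
def DeltaHyp (X : Type*) [MetricSpace X] (δ : ℝ) : Prop :=
  ∀ (x y z : X) (gxy gxz gyz : ℝ → X),
    IsGeodSegment gxy x y → IsGeodSegment gxz x z → IsGeodSegment gyz y z →
      ∀ s ∈ Set.Icc (0 : ℝ) (dist x y),
        ∃ w ∈ segImg gxz x z ∪ segImg gyz y z, dist (gxy s) w ≤ δ

/-- `X` is hyperbolic if it is `δ`-hyperbolic for some `δ ≥ 0`. -/
def GromovHyperbolic (X : Type*) [MetricSpace X] : Prop :=
  ∃ δ : ℝ, 0 ≤ δ ∧ DeltaHyp X δ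

/-- The Gromov product `(y⬝z)_x`. -/
noncomputable def gp {X : Type*} [MetricSpace X] (y z x : X) : ℝ :=
  (dist y x + dist z x - dist y z) / 2

/-- A geodesic ray (unit-speed, defined on `[0,∞)`). -/
def IsRay {X : Type*} [MetricSpace X] (γ : ℝ → X) : Prop :=
  ∀ s ∈ Set.Ici (0 : ℝ), ∀ t ∈ Set.Ici (0 : ℝ), dist (γ s) (γ t) = |s - t|

/-- `B` is the Busemann function associated to some geodesic ray. -/
def IsBusemann {X : Type*} [MetricSpace X] (B : X → ℝ) : Prop :=
  ∃ γ : ℝ → X, IsRay γ ∧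
    ∀ x : X, Filter.Tendsto (fun t => dist x (γ t) - t) Filter.atTop (nhds (B x))

/-- `γ` is a `B`-ray: a geodesic ray along which `B` decreases with unit speed. -/
def IsBRay {X : Type*} [MetricSpace X] (B : X → ℝ) (γ : ℝ → X) : Prop :=
  IsRay γ ∧ ∀ t ∈ Set.Ici (0 : ℝ), B (γ t) = B (γ 0) - t

/-- A `T`-function on `[α,ω]`: `f t = |t - m| + k` for some `m ∈ [α,ω]` and `k ∈ ℝ`. -/
def IsTFun (f : ℝ → ℝ) (α ω : ℝ) : Prop :=
  ∃ m ∈ Set.Icc α ω, ∃ k : ℝ, ∀ t ∈ Set.Icc α ω, f t = |t - m| + k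

/-- A `δ`-`T`-function on `[α,ω]`: uniformly `δ`-close to a `T`-function. -/
def IsDeltaTFun (δ : ℝ) (f : ℝ → ℝ) (α ω : ℝ) : Prop :=
  ∃ g : ℝ → ℝ, IsTFun g α ω ∧ ∀ t ∈ Set.Icc α ω, |f t - g t| ≤ δ

/-- The interior (induced length) metric associated to the metric of `Z`: the infimum of
lengths (total variations) of continuous paths joining the two points, with value in `ℝ≥0∞`. -/
noncomputable def intDist {Z : Type*} [MetricSpace Z] (p q : Z) : ℝ≥0∞ :=
  ⨅ (c : ℝ → Z) (_ : ContinuousOn c (Set.Icc 0 1)) (_ : c 0 = p) (_ : c 1 = q),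
    eVariationOn c (Set.Icc (0 : ℝ) 1)

/-- The "Gromov product with a Busemann function": `(x'⬝B)_x = ½(d(x,x') + B(x) - B(x'))`. -/
noncomputable def gpB {X : Type*} [MetricSpace X] (B : X → ℝ) (x x' : X) : ℝ :=
  (dist x x' + B x - B x') / 2

/-- Unit-speed geodesic segment with respect to a bare distance function `D`. -/
def IsGeodSegmentD {Z : Type*} (D : Z → Z → ℝ) (γ : ℝ → Z) (x y : Z) : Prop :=
  γ 0 = x ∧ γ (D x y) = y ∧
    ∀ s ∈ Set.Icc (0 : ℝ) (D x y), ∀ t ∈ Set.Icc (0 : ℝ) (D x y), D (γ s) (γ t) = |s - t|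

/-- `δ`-hyperbolicity with respect to a bare distance function `D`. -/
def DeltaHypD {Z : Type*} (D : Z → Z → ℝ) (δ : ℝ) : Prop :=
  ∀ (x y z : Z) (gxy gxz gyz : ℝ → Z),
    IsGeodSegmentD D gxy x y → IsGeodSegmentD D gxz x z → IsGeodSegmentD D gyz y z →
      ∀ s ∈ Set.Icc (0 : ℝ) (D x y),
        ∃ w ∈ (gxz '' Set.Icc 0 (D x z)) ∪ (gyz '' Set.Icc 0 (D y z)), D (gxy s) w ≤ δ
section IntDistAPI

open Set ENNReal

variable {Z : Type*} [MetricSpace Z]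

theorem intDist_le_eVar {c : ℝ → Z} (hc : ContinuousOn c (Set.Icc 0 1)) {p q : Z}
    (h0 : c 0 = p) (h1 : c 1 = q) : intDist p q ≤ eVariationOn c (Set.Icc 0 1) :=
  iInf_le_of_le c (iInf_le_of_le hc (iInf_le_of_le h0 (iInf_le_of_le h1 le_rfl)))

theorem eVar_le_of_lip {c : ℝ → Z} {C : ℝ≥0} (hc : LipschitzWith C c) :
    eVariationOn c (Set.Icc 0 1) ≤ (C : ℝ≥0∞) := by
  have h2 : eVariationOn (c ∘ id) (Set.Icc (0:ℝ) 1) ≤ (C : ℝ≥0∞) * eVariationOn id (Set.Icc (0:ℝ) 1) :=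
    LipschitzOnWith.comp_eVariationOn_le (hc.lipschitzOnWith (s := Set.Icc (0:ℝ) 1)) (Set.mapsTo_id _)
  have h3 : eVariationOn (id : ℝ → ℝ) (Set.Icc 0 1) ≤ ENNReal.ofReal 1 := by
    have := MonotoneOn.eVariationOn_le (f := (id : ℝ → ℝ)) (s := Set.Icc 0 1)
      (monotoneOn_id) (a := 0) (b := 1) (by constructor <;> norm_num) (by constructor <;> norm_num)
    simpa using this
  calc eVariationOn c (Set.Icc 0 1) = eVariationOn (c ∘ id) (Set.Icc (0:ℝ) 1) := rfl
    _ ≤ (C : ℝ≥0∞) * eVariationOn id (Set.Icc (0:ℝ) 1) := h2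
    _ ≤ (C : ℝ≥0∞) * ENNReal.ofReal 1 := by gcongr
    _ = C := by simp

theorem intDist_le_of_lip {c : ℝ → Z} {C : ℝ≥0} (hc : LipschitzWith C c) {p q : Z}
    (h0 : c 0 = p) (h1 : c 1 = q) : intDist p q ≤ (C : ℝ≥0∞) :=
  (intDist_le_eVar hc.continuous.continuousOn h0 h1).trans (eVar_le_of_lip hc)

theorem edist_le_intDist (p q : Z) : edist p q ≤ intDist p q := by
  refine le_iInf fun c => le_iInf fun hc => le_iInf fun h0 => le_iInf fun h1 => ?_
  rw [← h0, ← h1]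
  exact eVariationOn.edist_le c (by constructor <;> norm_num) (by constructor <;> norm_num)

theorem intDist_symm_le (p q : Z) : intDist p q ≤ intDist q p := by
  rw [intDist]
  refine le_iInf fun c => le_iInf fun hc => le_iInf fun h0 => le_iInf fun h1 => ?_
  have himg : (fun u : ℝ => 1 - u) '' Set.Icc 0 1 = Set.Icc 0 1 := by
    rw [Set.image_const_sub_Icc]; norm_num
  have hanti : AntitoneOn (fun u : ℝ => 1 - u) (Set.Icc 0 1) := fun a _ b _ hab => by
    simp only; linarith
  have hvar : eVariationOn (c ∘ fun u : ℝ => 1 - u) (Set.Icc 0 1) = eVariationOn c (Set.Icc 0 1) := by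
    rw [eVariationOn.comp_eq_of_antitoneOn c _ hanti, himg]
  refine le_trans (intDist_le_eVar ?_ ?_ ?_) hvar.le
  · refine hc.comp ((continuous_const.sub continuous_id).continuousOn) ?_
    intro u hu; rw [← himg]; exact Set.mem_image_of_mem _ hu
  · simpa using h1
  · simpa using h0

theorem intDist_symm (p q : Z) : intDist p q = intDist q p :=
  le_antisymm (intDist_symm_le p q) (intDist_symm_le q p)

theorem intDist_triangle_aux {c₁ c₂ : ℝ → Z} {p q r : Z}
    (hc₁ : ContinuousOn c₁ (Set.Icc 0 1)) (h₁0 : c₁ 0 = p) (h₁1 : c₁ 1 = q)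
    (hc₂ : ContinuousOn c₂ (Set.Icc 0 1)) (h₂0 : c₂ 0 = q) (h₂1 : c₂ 1 = r) :
    intDist p r ≤ eVariationOn c₁ (Set.Icc 0 1) + eVariationOn c₂ (Set.Icc 0 1) := by
  classical
  set c : ℝ → Z := fun u => if u ≤ 1/2 then c₁ (2*u) else c₂ (2*u - 1) with hcdef
  have hm1 : MonotoneOn (fun u : ℝ => 2*u) (Set.Icc 0 (1/2:ℝ)) := fun a _ b _ hab => by
    simp only; linarith
  have hm2 : MonotoneOn (fun u : ℝ => 2*u - 1) (Set.Icc (1/2:ℝ) 1) := fun a _ b _ hab => by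
    simp only; linarith
  have himg1 : (fun u : ℝ => 2*u) '' Set.Icc 0 (1/2) = Set.Icc 0 1 := by
    ext x; simp only [Set.mem_image, Set.mem_Icc]
    constructor
    · rintro ⟨y, ⟨hy1, hy2⟩, rfl⟩; constructor <;> linarith
    · rintro ⟨hx1, hx2⟩; exact ⟨x/2, ⟨by linarith, by linarith⟩, by ring⟩
  have himg2 : (fun u : ℝ => 2*u - 1) '' Set.Icc (1/2) 1 = Set.Icc 0 1 := by
    ext x; simp only [Set.mem_image, Set.mem_Icc]
    constructor
    · rintro ⟨y, ⟨hy1, hy2⟩, rfl⟩; constructor <;> linarith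
    · rintro ⟨hx1, hx2⟩; exact ⟨(x+1)/2, ⟨by linarith, by linarith⟩, by ring⟩
  have he1 : Set.EqOn c (c₁ ∘ fun u : ℝ => 2*u) (Set.Icc 0 (1/2)) := by
    intro u hu; simp only [c, Function.comp]
    rw [if_pos hu.2]
  have he2 : Set.EqOn c (c₂ ∘ fun u : ℝ => 2*u - 1) (Set.Icc (1/2) 1) := by
    intro u hu; simp only [c, Function.comp]
    by_cases h : u ≤ 1/2
    · have hu2 : u = 1/2 := le_antisymm h hu.1
      rw [if_pos h, hu2]
      norm_num [h₁1, h₂0]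
    · rw [if_neg h]
  have hv1 : eVariationOn c (Set.Icc 0 (1/2)) = eVariationOn c₁ (Set.Icc 0 1) := by
    rw [eVariationOn.eq_of_eqOn he1, eVariationOn.comp_eq_of_monotoneOn c₁ _ hm1, himg1]
  have hv2 : eVariationOn c (Set.Icc (1/2) 1) = eVariationOn c₂ (Set.Icc 0 1) := by
    rw [eVariationOn.eq_of_eqOn he2, eVariationOn.comp_eq_of_monotoneOn c₂ _ hm2, himg2]
  have hsplit := eVariationOn.Icc_add_Icc c (s := Set.Icc (0:ℝ) 1) (a := 0) (b := 1/2) (c := 1)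
    (by norm_num) (by norm_num) (by constructor <;> norm_num)
  have i1 : Set.Icc (0:ℝ) 1 ∩ Set.Icc 0 (1/2) = Set.Icc 0 (1/2) := by
    ext x; simp only [Set.mem_inter_iff, Set.mem_Icc]
    constructor
    · rintro ⟨h1, h2⟩; exact h2
    · rintro ⟨h1, h2⟩; exact ⟨⟨h1, by linarith⟩, h1, h2⟩
  have i2 : Set.Icc (0:ℝ) 1 ∩ Set.Icc (1/2) 1 = Set.Icc (1/2) 1 := by
    ext x; simp only [Set.mem_inter_iff, Set.mem_Icc]
    constructor
    · rintro ⟨h1, h2⟩; exact h2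
    · rintro ⟨h1, h2⟩; exact ⟨⟨by linarith, h2⟩, h1, h2⟩
  have i3 : Set.Icc (0:ℝ) 1 ∩ Set.Icc 0 1 = Set.Icc 0 1 := Set.inter_self _
  rw [i1, i2, i3, hv1, hv2] at hsplit
  have hset : {a : ℝ | a ≤ 1/2} = Set.Iic (1/2 : ℝ) := rfl
  have hcont : ContinuousOn c (Set.Icc 0 1) := by
    have hfr : ∀ a ∈ Set.Icc (0:ℝ) 1 ∩ frontier {a : ℝ | a ≤ 1/2}, c₁ (2*a) = c₂ (2*a - 1) := by
      intro a ha
      have hfr2 : frontier {a : ℝ | a ≤ 1/2} = {(1/2 : ℝ)} := by rw [hset, frontier_Iic]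
      rw [hfr2] at ha
      have : a = 1/2 := ha.2
      subst this; norm_num [h₁1, h₂0]
    refine ContinuousOn.if hfr ?_ ?_
    · rw [hset, closure_Iic]
      refine hc₁.comp ((continuous_const.mul continuous_id).continuousOn) ?_
      rintro u ⟨hu1, hu2⟩
      simp only [Set.mem_Iic] at hu2
      simp only [Set.mem_Icc] at hu1 ⊢
      constructor <;> [linarith [hu1.1]; linarith]
    · have hset2 : {a : ℝ | ¬ a ≤ 1/2} = Set.Ioi (1/2:ℝ) := by ext x; simp only [Set.mem_setOf_eq, Set.mem_Ioi, not_le]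
      rw [hset2, closure_Ioi]
      refine hc₂.comp (((continuous_const.mul continuous_id).sub continuous_const).continuousOn) ?_
      rintro u ⟨hu1, hu2⟩
      simp only [Set.mem_Ici] at hu2
      simp only [Set.mem_Icc] at hu1 ⊢
      constructor <;> [linarith; linarith [hu1.2]]
  have h0 : c 0 = p := by simp only [c]; rw [if_pos (by norm_num)]; simpa using h₁0
  have h1 : c 1 = r := by
    simp only [c]; rw [if_neg (by norm_num)]; norm_num [h₂1]
  exact (intDist_le_eVar hcont h0 h1).trans hsplit.symm.le

theorem intDist_triangle (p q r : Z) : intDist p r ≤ intDist p q + intDist q r := by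
  conv_rhs => rw [intDist, intDist]
  simp only [ENNReal.iInf_add, ENNReal.add_iInf]
  refine le_iInf fun c₁ => le_iInf fun hc₁ => le_iInf fun h₁0 => le_iInf fun h₁1 => ?_
  refine le_iInf fun c₂ => le_iInf fun hc₂ => le_iInf fun h₂0 => le_iInf fun h₂1 => ?_
  exact intDist_triangle_aux hc₂ h₂0 h₂1 hc₁ h₁0 h₁1

end IntDistAPI
section HypX

open Set Metric Filter

variable {X : Type*} [MetricSpace X]

theorem geod_dist_from_start {γ : ℝ → X} {x y : X} (h : IsGeodSegment γ x y)
    {r : ℝ} (hr : r ∈ Set.Icc 0 (dist x y)) : dist x (γ r) = r := by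
  have := h.2.2 0 ⟨le_refl 0, dist_nonneg⟩ r hr
  rw [h.1] at this
  rw [this, abs_of_nonpos (by linarith [hr.1])]
  linarith

theorem geod_dist_to_end {γ : ℝ → X} {x y : X} (h : IsGeodSegment γ x y)
    {r : ℝ} (hr : r ∈ Set.Icc 0 (dist x y)) : dist (γ r) y = dist x y - r := by
  have := h.2.2 r hr (dist x y) ⟨dist_nonneg, le_refl _⟩
  rw [h.2.1] at this
  rw [this, abs_of_nonpos (by linarith [hr.2])]
  ring

theorem geod_rev {γ : ℝ → X} {x y : X} (h : IsGeodSegment γ x y) :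
    IsGeodSegment (fun t => γ (dist x y - t)) y x := by
  obtain ⟨h0, h1, hd⟩ := h
  refine ⟨by simpa using h1, ?_, ?_⟩
  · rw [dist_comm y x]; simpa using h0
  · intro s hs t ht
    rw [dist_comm y x] at hs ht
    have := hd (dist x y - s) ⟨by linarith [hs.2], by linarith [hs.1]⟩
      (dist x y - t) ⟨by linarith [ht.2], by linarith [ht.1]⟩
    simp only at this ⊢
    rw [this, show dist x y - s - (dist x y - t) = t - s by ring, abs_sub_comm]

theorem segImg_rev {γ : ℝ → X} {x y : X} :
    segImg (fun t => γ (dist x y - t)) y x = segImg γ x y := by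
  unfold segImg
  rw [dist_comm y x]
  have h : (fun t => γ (dist x y - t)) = γ ∘ (fun t => dist x y - t) := rfl
  rw [h, Set.image_comp, Set.image_const_sub_Icc]
  norm_num

theorem gp_comm (y z x : X) : gp y z x = gp z y x := by
  unfold gp; rw [dist_comm y z]; ring_nf

theorem gp_nonneg (y z x : X) : 0 ≤ gp y z x := by
  unfold gp
  have := dist_triangle y x z
  rw [dist_comm x z] at this
  linarith

theorem gp_le_dist (y z x : X) : gp y z x ≤ dist z x := by
  unfold gp
  have := dist_triangle y z x
  linarith

theorem gp_le_dist_of_mem {g : ℝ → X} {a b : X} (h : IsGeodSegment g a b) (w : X)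
    {v : X} (hv : v ∈ segImg g a b) : gp a b w ≤ dist w v := by
  obtain ⟨r, hr, rfl⟩ := hv
  have h1 : dist a (g r) = r := geod_dist_from_start h hr
  have h2 : dist (g r) b = dist a b - r := geod_dist_to_end h hr
  have t1 : dist a w ≤ dist a (g r) + dist (g r) w := dist_triangle _ _ _
  have t2 : dist b w ≤ dist b (g r) + dist (g r) w := dist_triangle _ _ _
  have d1 : dist b (g r) = dist (g r) b := dist_comm _ _
  have d2 : dist (g r) w = dist w (g r) := dist_comm _ _
  unfold gp
  linarith

variable {δ : ℝ} (hgeo : GeodesicMS X) (hhyp : DeltaHyp X δ)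
include hgeo hhyp

theorem exists_near_on_geod {x z : X} (w : X) {g : ℝ → X} (hg : IsGeodSegment g x z) :
    ∃ u ∈ segImg g x z, dist w u ≤ gp x z w + 2 * δ := by
  have hc0 : 0 ≤ gp w z x := gp_nonneg w z x
  have hc1 : gp w z x ≤ dist x z := by rw [dist_comm x z]; exact gp_le_dist w z x
  obtain ⟨gxw, hgxw⟩ := hgeo x w
  obtain ⟨gzw, hgzw⟩ := hgeo z w
  obtain ⟨v, hv, hdv⟩ := hhyp x z w g gxw gzw hg hgxw hgzw (gp w z x) ⟨hc0, hc1⟩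
  refine ⟨g (gp w z x), ⟨_, ⟨hc0, hc1⟩, rfl⟩, ?_⟩
  have hxu : dist x (g (gp w z x)) = gp w z x := geod_dist_from_start hg ⟨hc0, hc1⟩
  have hzu : dist (g (gp w z x)) z = dist x z - gp w z x := geod_dist_to_end hg ⟨hc0, hc1⟩
  rcases hv with hv | hv
  · obtain ⟨r, hr, rfl⟩ := hv
    have e1 : dist x (gxw r) = r := geod_dist_from_start hgxw hr
    have e2 : dist (gxw r) w = dist x w - r := geod_dist_to_end hgxw hr
    have t1 : dist x (g (gp w z x)) ≤ dist x (gxw r) + dist (gxw r) (g (gp w z x)) :=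
      dist_triangle _ _ _
    have t2 : dist w (g (gp w z x)) ≤ dist w (gxw r) + dist (gxw r) (g (gp w z x)) :=
      dist_triangle _ _ _
    have d1 : dist w (gxw r) = dist (gxw r) w := dist_comm _ _
    have d2 : dist (gxw r) (g (gp w z x)) = dist (g (gp w z x)) (gxw r) := dist_comm _ _
    have d3 : dist w x = dist x w := dist_comm _ _
    have d4 : dist w z = dist z w := dist_comm _ _
    have d5 : dist z x = dist x z := dist_comm _ _
    have hgp1 : gp w z x = (dist w x + dist z x - dist w z) / 2 := rfl
    have hgp2 : gp x z w = (dist x w + dist z w - dist x z) / 2 := rfl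
    linarith
  · obtain ⟨r, hr, rfl⟩ := hv
    have e1 : dist z (gzw r) = r := geod_dist_from_start hgzw hr
    have e2 : dist (gzw r) w = dist z w - r := geod_dist_to_end hgzw hr
    have t1 : dist z (g (gp w z x)) ≤ dist z (gzw r) + dist (gzw r) (g (gp w z x)) :=
      dist_triangle _ _ _
    have t2 : dist w (g (gp w z x)) ≤ dist w (gzw r) + dist (gzw r) (g (gp w z x)) :=
      dist_triangle _ _ _
    have d1 : dist w (gzw r) = dist (gzw r) w := dist_comm _ _
    have d2 : dist (gzw r) (g (gp w z x)) = dist (g (gp w z x)) (gzw r) := dist_comm _ _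
    have d3 : dist w x = dist x w := dist_comm _ _
    have d4 : dist w z = dist z w := dist_comm _ _
    have d5 : dist z x = dist x z := dist_comm _ _
    have d7 : dist z (g (gp w z x)) = dist (g (gp w z x)) z := dist_comm _ _
    have hgp1 : gp w z x = (dist w x + dist z x - dist w z) / 2 := rfl
    have hgp2 : gp x z w = (dist x w + dist z w - dist x z) / 2 := rfl
    linarith

theorem gp_min (w x y z : X) :
    min (gp x y w) (gp y z w) - 3 * δ ≤ gp x z w := by
  obtain ⟨g, hg⟩ := hgeo x z
  obtain ⟨u, hu, hdu⟩ := exists_near_on_geod hgeo hhyp w hg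
  obtain ⟨gxy, hgxy⟩ := hgeo x y
  obtain ⟨gzy, hgzy⟩ := hgeo z y
  obtain ⟨r, hr, rfl⟩ := hu
  obtain ⟨v, hv, hdv⟩ := hhyp x z y g gxy gzy hg hgxy hgzy r hr
  have hwv : dist w v ≤ gp x z w + 3 * δ := by
    have := dist_triangle w (g r) v
    linarith
  rcases hv with hv | hv
  · have h1 : gp x y w ≤ dist w v := gp_le_dist_of_mem hgxy w hv
    have := min_le_left (gp x y w) (gp y z w)
    linarith
  · have h1 : gp z y w ≤ dist w v := gp_le_dist_of_mem hgzy w hv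
    rw [gp_comm z y w] at h1
    have := min_le_right (gp x y w) (gp y z w)
    linarith

end HypX

/-- (B x + B y - d(x,y))/2 : the "Gromov product with the ideal point of B". -/
noncomputable def kB {X : Type*} [MetricSpace X] (B : X → ℝ) (x y : X) : ℝ :=
  (B x + B y - dist x y) / 2

section BusX

open Set Metric Filter

variable {X : Type*} [MetricSpace X] {B : X → ℝ} {γ₀ : ℝ → X}
  (hB : ∀ x : X, Filter.Tendsto (fun t => dist x (γ₀ t) - t) Filter.atTop (nhds (B x)))
include hB

theorem bus_lip (x y : X) : |B x - B y| ≤ dist x y := by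
  have h1 : Tendsto (fun t : ℝ => |(dist x (γ₀ t) - t) - (dist y (γ₀ t) - t)|) atTop
      (nhds |B x - B y|) := ((hB x).sub (hB y)).abs
  refine le_of_tendsto h1 (Filter.Eventually.of_forall fun t => ?_)
  have h2 : (dist x (γ₀ t) - t) - (dist y (γ₀ t) - t) = dist x (γ₀ t) - dist y (γ₀ t) := by ring
  rw [h2]
  exact abs_dist_sub_le x y (γ₀ t)

theorem busN (x : X) : Tendsto (fun n : ℕ => dist x (γ₀ n) - n) atTop (nhds (B x)) :=
  (hB x).comp tendsto_natCast_atTop_atTop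

theorem kB_tendsto (x y : X) :
    Tendsto (fun n : ℕ => gp x y (γ₀ n) - n) atTop (nhds (kB B x y)) := by
  have h1 : Tendsto (fun n : ℕ => ((dist x (γ₀ n) - n) + (dist y (γ₀ n) - n) - dist x y) / 2)
      atTop (nhds ((B x + B y - dist x y) / 2)) :=
    (((busN hB x).add (busN hB y)).sub tendsto_const_nhds).div_const 2
  have h2 : (fun n : ℕ => gp x y (γ₀ n) - n) =
      (fun n : ℕ => ((dist x (γ₀ n) - n) + (dist y (γ₀ n) - n) - dist x y) / 2) := by
    funext n; unfold gp; rw [dist_comm x (γ₀ n), dist_comm y (γ₀ n)]; ring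
  rw [h2]; exact h1

theorem kB_le_left (x y : X) : kB B x y ≤ B x := by
  have h := bus_lip hB y x
  have := abs_le.mp h
  unfold kB
  rw [dist_comm y x] at this
  linarith [this.1]

theorem kB_le_right (x y : X) : kB B x y ≤ B y := by
  have h := bus_lip hB x y
  have := abs_le.mp h
  unfold kB
  linarith [this.1]

theorem kB_min {δ : ℝ} (hgeo : GeodesicMS X) (hhyp : DeltaHyp X δ) (x y z : X) :
    min (kB B x y) (kB B y z) - 3 * δ ≤ kB B x z := by
  have hlim1 : Tendsto (fun n : ℕ => min (gp x y (γ₀ n) - n) (gp y z (γ₀ n) - n) - 3 * δ)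
      atTop (nhds (min (kB B x y) (kB B y z) - 3 * δ)) :=
    ((kB_tendsto hB x y).min (kB_tendsto hB y z)).sub tendsto_const_nhds
  refine le_of_tendsto_of_tendsto' hlim1 (kB_tendsto hB x z) fun n => ?_
  have h := gp_min hgeo hhyp (γ₀ n) x y z
  have hmin : min (gp x y (γ₀ n) - n) (gp y z (γ₀ n) - n)
      = min (gp x y (γ₀ n)) (gp y z (γ₀ n)) - n := by
    rcases le_total (gp x y (γ₀ n)) (gp y z (γ₀ n)) with hc | hc
    · rw [min_eq_left hc, min_eq_left (by linarith : gp x y (γ₀ n) - (n:ℝ) ≤ gp y z (γ₀ n) - n)]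
    · rw [min_eq_right hc, min_eq_right (by linarith : gp y z (γ₀ n) - (n:ℝ) ≤ gp x y (γ₀ n) - n)]
  rw [hmin]
  linarith

end BusX
section RayX

open Set Metric Filter

variable {X : Type*} [MetricSpace X] [ProperSpace X] {δ : ℝ} {B : X → ℝ} {γ₀ : ℝ → X}

theorem exists_rays (hgeo : GeodesicMS X) (hhyp : DeltaHyp X δ) (hray : IsRay γ₀)
    (hB : ∀ x : X, Filter.Tendsto (fun t => dist x (γ₀ t) - t) Filter.atTop (nhds (B x))) :
    ∃ σ : X → ℝ → X,
      (∀ x, σ x 0 = x) ∧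
      (∀ x s t, 0 ≤ s → 0 ≤ t → dist (σ x s) (σ x t) = |s - t|) ∧
      (∀ x t, 0 ≤ t → B (σ x t) = B x - t) ∧
      (∀ x y s t, 0 ≤ s → 0 ≤ t → B x - s = B y - t → B x - s ≤ kB B x y - (δ + 1) →
        dist (σ x s) (σ y t) ≤ 2 * δ + 1) := by
  classical
  obtain ⟨g, hg⟩ : ∃ g : X → X → ℝ → X, ∀ x y, IsGeodSegment (g x y) x y :=
    ⟨fun x y => Classical.choose (hgeo x y), fun x y => Classical.choose_spec (hgeo x y)⟩
  haveI : (atTop : Filter ℕ).NeBot := atTop_neBot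
  set 𝒰 : Ultrafilter ℕ := Ultrafilter.of atTop with h𝒰
  have hU : (𝒰 : Filter ℕ) ≤ atTop := Ultrafilter.of_le _
  set gP : X → ℕ → ℝ → X := fun x n t => g x (γ₀ n) (max 0 (min t (dist x (γ₀ n)))) with hgPdef
  have hclamp_mem : ∀ (x : X) (n : ℕ) (t : ℝ),
      max 0 (min t (dist x (γ₀ n))) ∈ Set.Icc 0 (dist x (γ₀ n)) := by
    intro x n t
    refine ⟨le_max_left _ _, ?_⟩
    rcases le_total t (dist x (γ₀ n)) with h | h
    · rw [min_eq_left h]; exact max_le dist_nonneg h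
    · rw [min_eq_right h]; exact max_le dist_nonneg le_rfl
  have hball : ∀ (x : X) (n : ℕ) (t : ℝ), gP x n t ∈ closedBall x |t| := by
    intro x n t
    rw [mem_closedBall, dist_comm]
    rw [hgPdef]
    simp only
    rw [geod_dist_from_start (hg x (γ₀ n)) (hclamp_mem x n t)]
    rcases le_total t (dist x (γ₀ n)) with h | h
    · rw [min_eq_left h]; exact max_le (abs_nonneg t) (le_abs_self t)
    · rw [min_eq_right h]; exact max_le (abs_nonneg t) (h.trans (le_abs_self t))
  -- the limit rays
  have hex : ∀ (x : X) (t : ℝ), ∃ y : X, Tendsto (fun n => gP x n t) (𝒰 : Filter ℕ) (nhds y) := by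
    intro x t
    have hc : IsCompact (closedBall x |t|) := isCompact_closedBall x |t|
    have hle : (↑(𝒰.map (fun n => gP x n t)) : Filter X) ≤ Filter.principal (closedBall x |t|) := by
      rw [Ultrafilter.coe_map, Filter.le_principal_iff]
      exact Filter.mem_map.mpr (Filter.Eventually.of_forall (fun n => hball x n t))
    obtain ⟨y, _, hy⟩ := hc.ultrafilter_le_nhds (𝒰.map (fun n => gP x n t)) hle
    rw [Ultrafilter.coe_map] at hy
    exact ⟨y, hy⟩
  set σ : X → ℝ → X := fun x t => Classical.choose (hex x t) with hσdef
  have hσ : ∀ (x : X) (t : ℝ), Tendsto (fun n => gP x n t) (𝒰 : Filter ℕ) (nhds (σ x t)) :=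
    fun x t => Classical.choose_spec (hex x t)
  -- dist x (γ₀ n) → ∞
  have hd0 : ∀ (x : X), ∀ (n : ℕ), (n : ℝ) - dist x (γ₀ 0) ≤ dist x (γ₀ n) := by
    intro x n
    have h1 : dist (γ₀ 0) (γ₀ n) = (n : ℝ) := by
      rw [hray 0 (Set.mem_Ici.mpr le_rfl) n (Set.mem_Ici.mpr (Nat.cast_nonneg n))]
      rw [abs_of_nonpos (by simp), neg_sub, sub_zero]
    have := dist_triangle (γ₀ 0) x (γ₀ n)
    rw [dist_comm (γ₀ 0) x] at this
    linarith
  have hdtop : ∀ x : X, Tendsto (fun n : ℕ => dist x (γ₀ n)) atTop atTop := by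
    intro x
    refine tendsto_atTop_mono (hd0 x) ?_
    exact (tendsto_atTop_add_const_right _ _ tendsto_natCast_atTop_atTop)
  -- eventually the clamp is trivial
  have hclamp_ev : ∀ (x : X) {t : ℝ}, 0 ≤ t → ∀ᶠ n in (𝒰 : Filter ℕ), gP x n t = g x (γ₀ n) t := by
    intro x t ht
    refine hU ?_
    filter_upwards [(hdtop x).eventually_ge_atTop t] with n hn
    rw [hgPdef]; simp only
    rw [min_eq_left hn, max_eq_right ht]
  -- B is Lipschitz
  have hBlip : LipschitzWith 1 B := by
    refine LipschitzWith.of_dist_le_mul fun x y => ?_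
    rw [Real.dist_eq, NNReal.coe_one, one_mul]
    exact bus_lip hB x y
  -- B x ≤ dist x (γ₀ n) - n for all n
  have hBle : ∀ (x : X) (n : ℕ), B x ≤ dist x (γ₀ n) - n := by
    intro x n
    refine le_of_tendsto (hB x) ?_
    filter_upwards [eventually_ge_atTop (n : ℝ)] with m hm
    have h1 : dist (γ₀ n) (γ₀ m) = m - n := by
      rw [hray n (Set.mem_Ici.mpr (Nat.cast_nonneg n)) m (Set.mem_Ici.mpr (le_trans (Nat.cast_nonneg n) hm))]
      rw [abs_of_nonpos (by linarith), neg_sub]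
    have := dist_triangle x (γ₀ n) (γ₀ m)
    linarith
  -- upper bound for B along approximating geodesics
  have hUp : ∀ (x : X) (n : ℕ) (r : ℝ), r ∈ Set.Icc 0 (dist x (γ₀ n)) →
      B (g x (γ₀ n) r) ≤ dist x (γ₀ n) - n - r := by
    intro x n r hr
    have h2 : dist (g x (γ₀ n) r) (γ₀ n) = dist x (γ₀ n) - r :=
      geod_dist_to_end (hg x (γ₀ n)) hr
    have := hBle (g x (γ₀ n) r) n
    linarith
  -- lower bound for B along approximating geodesics
  have hLow : ∀ (x : X) (n : ℕ) (r : ℝ), r ∈ Set.Icc 0 (dist x (γ₀ n)) →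
      B x - r ≤ B (g x (γ₀ n) r) := by
    intro x n r hr
    have h1 : dist x (g x (γ₀ n) r) = r := geod_dist_from_start (hg x (γ₀ n)) hr
    have := abs_le.mp (bus_lip hB x (g x (γ₀ n) r))
    linarith [this.1, h1]
  refine ⟨σ, ?_, ?_, ?_, ?_⟩
  · -- σ x 0 = x
    intro x
    have hev : ∀ᶠ n in (𝒰 : Filter ℕ), gP x n 0 = x := by
      filter_upwards [hclamp_ev x le_rfl] with n hn
      rw [hn, (hg x (γ₀ n)).1]
    have h1 : Tendsto (fun n => gP x n 0) (𝒰 : Filter ℕ) (nhds x) :=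
      Tendsto.congr' (Filter.EventuallyEq.symm hev) tendsto_const_nhds
    exact tendsto_nhds_unique (hσ x 0) h1
  · -- ray property
    intro x s t hs ht
    have h1 : Tendsto (fun n => dist (gP x n s) (gP x n t)) (𝒰 : Filter ℕ)
        (nhds (dist (σ x s) (σ x t))) := (hσ x s).dist (hσ x t)
    have hev : ∀ᶠ n in (𝒰 : Filter ℕ), dist (gP x n s) (gP x n t) = |s - t| := by
      filter_upwards [hclamp_ev x hs, hclamp_ev x ht,
        hU ((hdtop x).eventually_ge_atTop s), hU ((hdtop x).eventually_ge_atTop t)]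
        with n hns hnt hds hdt
      rw [hns, hnt]
      exact (hg x (γ₀ n)).2.2 s ⟨hs, hds⟩ t ⟨ht, hdt⟩
    have h2 : Tendsto (fun n => dist (gP x n s) (gP x n t)) (𝒰 : Filter ℕ) (nhds |s - t|) :=
      Tendsto.congr' (Filter.EventuallyEq.symm hev) tendsto_const_nhds
    exact tendsto_nhds_unique h1 h2
  · -- height along rays
    intro x t ht
    have h1 : Tendsto (fun n => B (gP x n t)) (𝒰 : Filter ℕ) (nhds (B (σ x t))) :=
      (hBlip.continuous.tendsto _).comp (hσ x t)
    have hlow : B x - t ≤ B (σ x t) := by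
      refine ge_of_tendsto h1 ?_
      filter_upwards [hclamp_ev x ht, hU ((hdtop x).eventually_ge_atTop t)] with n hn hdn
      rw [hn]
      exact hLow x n t ⟨ht, hdn⟩
    have hup : B (σ x t) ≤ B x - t := by
      have h2 : Tendsto (fun n : ℕ => dist x (γ₀ n) - n - t) (𝒰 : Filter ℕ) (nhds (B x - t)) :=
        ((busN hB x).sub tendsto_const_nhds).mono_left hU
      refine le_of_tendsto_of_tendsto h1 h2 ?_
      filter_upwards [hclamp_ev x ht, hU ((hdtop x).eventually_ge_atTop t)] with n hn hdn
      rw [hn]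
      exact hUp x n t ⟨ht, hdn⟩
    linarith
  · -- asymptotic estimate
    intro x y s t hs ht heq hk
    have h1 : Tendsto (fun n => dist (gP x n s) (gP y n t)) (𝒰 : Filter ℕ)
        (nhds (dist (σ x s) (σ y t))) := (hσ x s).dist (hσ y t)
    refine le_of_tendsto h1 ?_
    have hεx : ∀ᶠ (n : ℕ) in (𝒰 : Filter ℕ), dist x (γ₀ (n:ℝ)) - (n:ℝ) ≤ B x + 4⁻¹ :=
      hU ((busN hB x).eventually (eventually_le_nhds (show B x < B x + 4⁻¹ by norm_num)))
    have hεy : ∀ᶠ (n : ℕ) in (𝒰 : Filter ℕ), dist y (γ₀ (n:ℝ)) - (n:ℝ) ≤ B y + 4⁻¹ :=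
      hU ((busN hB y).eventually (eventually_le_nhds (show B y < B y + 4⁻¹ by norm_num)))
    filter_upwards [hclamp_ev x hs, hclamp_ev y ht, hU ((hdtop x).eventually_ge_atTop s),
      hU ((hdtop y).eventually_ge_atTop t), hεx, hεy] with n hnx hny hdx hdy hex hey
    rw [hnx, hny]
    have hsIcc : s ∈ Set.Icc 0 (dist x (γ₀ n)) := ⟨hs, hdx⟩
    have htIcc : t ∈ Set.Icc 0 (dist y (γ₀ n)) := ⟨ht, hdy⟩
    obtain ⟨w, hw, hdw⟩ := hhyp x (γ₀ n) y (g x (γ₀ n)) (g x y)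
      (fun r => g y (γ₀ n) (dist y (γ₀ n) - r)) (hg x (γ₀ n)) (hg x y)
      (geod_rev (hg y (γ₀ n))) s hsIcc
    have hBu_low : B x - s ≤ B (g x (γ₀ n) s) := hLow x n s hsIcc
    have hBu_up : B (g x (γ₀ n) s) ≤ dist x (γ₀ n) - n - s := hUp x n s hsIcc
    rcases hw with hw | hw
    · exfalso
      obtain ⟨r, hr, rfl⟩ := hw
      have e1 : dist x (g x y r) = r := geod_dist_from_start (hg x y) hr
      have e2 : dist (g x y r) y = dist x y - r := geod_dist_to_end (hg x y) hr
      have b1 := abs_le.mp (bus_lip hB x (g x y r))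
      have b2 := abs_le.mp (bus_lip hB y (g x y r))
      have b3 := abs_le.mp (bus_lip hB (g x (γ₀ n) s) (g x y r))
      have d1 : dist y (g x y r) = dist (g x y r) y := dist_comm _ _
      have hkB : kB B x y = (B x + B y - dist x y)/2 := rfl
      linarith [b1.1, b1.2, b2.1, b2.2, b3.1, b3.2, hdw]
    · rw [segImg_rev] at hw
      obtain ⟨r, hr, rfl⟩ := hw
      have hw_low : B y - r ≤ B (g y (γ₀ n) r) := hLow y n r hr
      have hw_up : B (g y (γ₀ n) r) ≤ dist y (γ₀ n) - n - r := hUp y n r hr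
      have b3 := abs_le.mp (bus_lip hB (g x (γ₀ n) s) (g y (γ₀ n) r))
      have habs : |r - t| ≤ δ + 2⁻¹ := by
        rw [abs_le]
        constructor
        · -- -(δ + 1/2) ≤ r - t  i.e.  t - r ≤ δ + 1/2
          nlinarith [b3.1, b3.2, hdw, hw_low, hBu_up, hex, heq]
        · nlinarith [b3.1, b3.2, hdw, hw_up, hBu_low, hey, heq]
      have hdist2 : dist (g y (γ₀ n) r) (g y (γ₀ n) t) = |r - t| :=
        (hg y (γ₀ n)).2.2 r hr t htIcc
      have := dist_triangle (g x (γ₀ n) s) (g y (γ₀ n) r) (g y (γ₀ n) t)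
      rw [hdist2] at this
      linarith [hdw]

end RayX
section Helpers

open Set Metric Filter ENNReal

theorem four_pt_of_triple {a b c d x y ε : ℝ} (h1 : min a d - ε ≤ x) (h2 : min b c - ε ≤ x)
    (h3 : min a c - ε ≤ y) (h4 : min b d - ε ≤ y) :
    min (a + b) (c + d) - 2 * ε ≤ x + y := by
  rcases min_choice a d with h5 | h5 <;> rcases min_choice b c with h6 | h6 <;>
    rcases min_choice a c with h7 | h7 <;> rcases min_choice b d with h8 | h8 <;>
    linarith [min_le_left a d, min_le_right a d, min_le_left b c, min_le_right b c,
      min_le_left a c, min_le_right a c, min_le_left b d, min_le_right b d,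
      min_le_left (a + b) (c + d), min_le_right (a + b) (c + d)]

/-- the clamp function to [0,1] -/
noncomputable def cl (u : ℝ) : ℝ := max 0 (min 1 u)

theorem cl_mem (u : ℝ) : cl u ∈ Set.Icc (0:ℝ) 1 := by
  unfold cl
  refine ⟨le_max_left _ _, ?_⟩
  rcases le_total u 1 with h | h
  · rw [min_eq_right h]; rcases le_total u 0 with h2 | h2
    · rw [max_eq_left h2]; norm_num
    · rw [max_eq_right h2]; exact h
  · rw [min_eq_left h]; norm_num
theorem cl_zero : cl 0 = 0 := by unfold cl; norm_num
theorem cl_one : cl 1 = 1 := by unfold cl; norm_num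
theorem cl_lip (u v : ℝ) : |cl u - cl v| ≤ |u - v| := by
  unfold cl
  calc |max 0 (min 1 u) - max 0 (min 1 v)| = |max (min 1 u) 0 - max (min 1 v) 0| := by
        rw [max_comm (0:ℝ) (min 1 u), max_comm (0:ℝ) (min 1 v)]
    _ ≤ |min 1 u - min 1 v| := abs_max_sub_max_le_abs _ _ _
    _ ≤ max |1 - 1| |u - v| := abs_min_sub_min_le_max 1 u 1 v
    _ ≤ |u - v| := by rw [sub_self, abs_zero]; exact max_le (abs_nonneg _) le_rfl

variable {X₁ : Type*} {X₂ : Type*} [MetricSpace X₁] [MetricSpace X₂]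

theorem distY_eq {B₁ : X₁ → ℝ} {B₂ : X₂ → ℝ} (p q : {r : X₁ × X₂ // B₁ r.1 = B₂ r.2}) :
    dist p q = max (dist p.1.1 q.1.1) (dist p.1.2 q.1.2) := by
  rw [Subtype.dist_eq, Prod.dist_eq]

theorem pieceY {B₁ : X₁ → ℝ} {B₂ : X₂ → ℝ} (c₁ : ℝ → X₁) (c₂ : ℝ → X₂)
    (hmem : ∀ u, B₁ (c₁ u) = B₂ (c₂ u)) {C : ℝ} (hC : 0 ≤ C)
    (h₁ : ∀ u v, dist (c₁ u) (c₁ v) ≤ C * |u - v|)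
    (h₂ : ∀ u v, dist (c₂ u) (c₂ v) ≤ C * |u - v|) :
    intDist (⟨(c₁ 0, c₂ 0), hmem 0⟩ : {r : X₁ × X₂ // B₁ r.1 = B₂ r.2})
      ⟨(c₁ 1, c₂ 1), hmem 1⟩ ≤ ENNReal.ofReal C := by
  set c : ℝ → {r : X₁ × X₂ // B₁ r.1 = B₂ r.2} := fun u => ⟨(c₁ u, c₂ u), hmem u⟩ with hc
  have hlip : LipschitzWith (Real.toNNReal C) c := by
    refine LipschitzWith.of_dist_le_mul fun u v => ?_
    rw [distY_eq]
    simp only [c]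
    rw [Real.coe_toNNReal C hC, Real.dist_eq]
    exact max_le (h₁ u v) (h₂ u v)
  have := intDist_le_of_lip hlip rfl rfl
  rwa [ENNReal.ofReal]

end Helpers
section YUpper

open Set Metric Filter ENNReal

variable {X₁ : Type*} {X₂ : Type*} [MetricSpace X₁] [MetricSpace X₂]
  [ProperSpace X₁] [ProperSpace X₂] {δ : ℝ}

theorem Y_upper (hδ : 0 ≤ δ)
    (hgeo₁ : GeodesicMS X₁) (hgeo₂ : GeodesicMS X₂)
    (hhyp₁ : DeltaHyp X₁ δ) (hhyp₂ : DeltaHyp X₂ δ)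
    {B₁ : X₁ → ℝ} {B₂ : X₂ → ℝ} {γ₁ : ℝ → X₁} {γ₂ : ℝ → X₂}
    (hray₁ : IsRay γ₁) (hray₂ : IsRay γ₂)
    (hlim₁ : ∀ x, Tendsto (fun t => dist x (γ₁ t) - t) atTop (nhds (B₁ x)))
    (hlim₂ : ∀ x, Tendsto (fun t => dist x (γ₂ t) - t) atTop (nhds (B₂ x)))
    (p q : {r : X₁ × X₂ // B₁ r.1 = B₂ r.2}) :
    intDist p q ≤ ENNReal.ofReal (dist p q + (12 * δ + 10)) := by
  obtain ⟨σ₁, hσ₁0, hσ₁ray, hσ₁h, hσ₁D⟩ := exists_rays hgeo₁ hhyp₁ hray₁ hlim₁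
  obtain ⟨σ₂, hσ₂0, hσ₂ray, hσ₂h, hσ₂D⟩ := exists_rays hgeo₂ hhyp₂ hray₂ hlim₂
  obtain ⟨⟨x₁, x₂⟩, hp⟩ := p
  obtain ⟨⟨y₁, y₂⟩, hq⟩ := q
  simp only at hp hq
  set k₁ := kB B₁ x₁ y₁ with hk₁def
  set k₂ := kB B₂ x₂ y₂ with hk₂def
  set KK := min k₁ k₂ - (2*δ + 2) with hKKdef
  -- basic height facts
  have hk₁x : k₁ ≤ B₁ x₁ := kB_le_left hlim₁ x₁ y₁
  have hk₁y : k₁ ≤ B₁ y₁ := kB_le_right hlim₁ x₁ y₁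
  have hminle₁ : min k₁ k₂ ≤ k₁ := min_le_left _ _
  have hminle₂ : min k₁ k₂ ≤ k₂ := min_le_right _ _
  have hKx : KK ≤ B₁ x₁ := by simp only [hKKdef]; linarith
  have hKy : KK ≤ B₁ y₁ := by simp only [hKKdef]; linarith
  have hpar1 : 0 ≤ B₁ x₁ - KK + (δ + 1) := by linarith
  have hpar2 : 0 ≤ B₁ y₁ - KK + (δ + 1) := by linarith
  -- the four corner points at depth
  set e₁ := σ₁ x₁ (B₁ x₁ - KK + (δ + 1)) with he₁def
  set e₁' := σ₁ y₁ (B₁ y₁ - KK + (δ + 1)) with he₁'def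
  set e₂ := σ₂ x₂ (B₁ x₁ - KK + (δ + 1)) with he₂def
  set e₂' := σ₂ y₂ (B₁ y₁ - KK + (δ + 1)) with he₂'def
  have hBe₁ : B₁ e₁ = KK - (δ + 1) := by
    rw [he₁def, hσ₁h x₁ _ hpar1]; ring
  have hBe₁' : B₁ e₁' = KK - (δ + 1) := by
    rw [he₁'def, hσ₁h y₁ _ hpar2]; ring
  have hBe₂ : B₂ e₂ = KK - (δ + 1) := by
    rw [he₂def, hσ₂h x₂ _ hpar1, ← hp]; ring
  have hBe₂' : B₂ e₂' = KK - (δ + 1) := by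
    rw [he₂'def, hσ₂h y₂ _ hpar2, ← hq]; ring
  -- the deep corners are close (assymptotic rays)
  have hL₁ : dist e₁ e₁' ≤ 2 * δ + 1 := by
    refine hσ₁D x₁ y₁ _ _ hpar1 hpar2 (by ring) ?_
    rw [← hk₁def]
    simp only [hKKdef]
    linarith
  have hL₂ : dist e₂ e₂' ≤ 2 * δ + 1 := by
    refine hσ₂D x₂ y₂ _ _ hpar1 hpar2 ?_ ?_
    · rw [← hp, ← hq]; ring
    · rw [← hp, ← hk₂def]
      simp only [hKKdef]
      linarith
  obtain ⟨g₁, hg₁⟩ := hgeo₁ e₁ e₁'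
  obtain ⟨g₂, hg₂⟩ := hgeo₂ e₂ e₂'
  -- heights along the middle geodesics stay at most KK
  have hmid₁ : ∀ r ∈ Set.Icc 0 (dist e₁ e₁'), B₁ (g₁ r) ≤ KK := by
    intro r hr
    have d1 : dist e₁ (g₁ r) = r := geod_dist_from_start hg₁ hr
    have d2 : dist (g₁ r) e₁' = dist e₁ e₁' - r := geod_dist_to_end hg₁ hr
    have b1 := abs_le.mp (bus_lip hlim₁ e₁ (g₁ r))
    have b2 := abs_le.mp (bus_lip hlim₁ e₁' (g₁ r))
    have dc : dist e₁' (g₁ r) = dist (g₁ r) e₁' := dist_comm _ _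
    rcases le_total r ((dist e₁ e₁')/2) with hc | hc
    · rw [d1] at b1; linarith [b1.1, hBe₁, hL₁]
    · rw [dc, d2] at b2; linarith [b2.1, hBe₁', hL₁]
  have hmid₂ : ∀ r ∈ Set.Icc 0 (dist e₂ e₂'), B₂ (g₂ r) ≤ KK := by
    intro r hr
    have d1 : dist e₂ (g₂ r) = r := geod_dist_from_start hg₂ hr
    have d2 : dist (g₂ r) e₂' = dist e₂ e₂' - r := geod_dist_to_end hg₂ hr
    have b1 := abs_le.mp (bus_lip hlim₂ e₂ (g₂ r))
    have b2 := abs_le.mp (bus_lip hlim₂ e₂' (g₂ r))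
    have dc : dist e₂' (g₂ r) = dist (g₂ r) e₂' := dist_comm _ _
    rcases le_total r ((dist e₂ e₂')/2) with hc | hc
    · rw [d1] at b1; linarith [b1.1, hBe₂, hL₂]
    · rw [dc, d2] at b2; linarith [b2.1, hBe₂', hL₂]
  have hl₁pos : 0 ≤ dist e₁ e₁' := dist_nonneg
  have hl₂pos : 0 ≤ dist e₂ e₂' := dist_nonneg
  have hclmul₁ : ∀ u : ℝ, dist e₁ e₁' * cl u ∈ Set.Icc 0 (dist e₁ e₁') := by
    intro u
    constructor
    · exact mul_nonneg hl₁pos (cl_mem u).1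
    · calc dist e₁ e₁' * cl u ≤ dist e₁ e₁' * 1 := by
            exact mul_le_mul_of_nonneg_left (cl_mem u).2 hl₁pos
        _ = dist e₁ e₁' := mul_one _
  have hclmul₂ : ∀ u : ℝ, dist e₂ e₂' * cl u ∈ Set.Icc 0 (dist e₂ e₂') := by
    intro u
    constructor
    · exact mul_nonneg hl₂pos (cl_mem u).1
    · calc dist e₂ e₂' * cl u ≤ dist e₂ e₂' * 1 := by
            exact mul_le_mul_of_nonneg_left (cl_mem u).2 hl₂pos
        _ = dist e₂ e₂' := mul_one _
  -- Segment 1 : simultaneous descent from (x₁,x₂) to (e₁,e₂)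
  have hseg1 : intDist (⟨(x₁, x₂), hp⟩ : {r : X₁ × X₂ // B₁ r.1 = B₂ r.2})
      ⟨(e₁, e₂), by rw [hBe₁, hBe₂]⟩ ≤ ENNReal.ofReal (B₁ x₁ - KK + (δ + 1)) := by
    have hmem : ∀ u : ℝ, B₁ (σ₁ x₁ ((B₁ x₁ - KK + (δ + 1)) * cl u))
        = B₂ (σ₂ x₂ ((B₁ x₁ - KK + (δ + 1)) * cl u)) := by
      intro u
      have hnn : 0 ≤ (B₁ x₁ - KK + (δ + 1)) * cl u := mul_nonneg hpar1 (cl_mem u).1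
      rw [hσ₁h x₁ _ hnn, hσ₂h x₂ _ hnn, ← hp]
    have hbound := pieceY (B₁ := B₁) (B₂ := B₂)
      (fun u => σ₁ x₁ ((B₁ x₁ - KK + (δ + 1)) * cl u))
      (fun u => σ₂ x₂ ((B₁ x₁ - KK + (δ + 1)) * cl u)) hmem hpar1
      (fun u v => by
        rw [hσ₁ray x₁ _ _ (mul_nonneg hpar1 (cl_mem u).1) (mul_nonneg hpar1 (cl_mem v).1),
          ← mul_sub, abs_mul, abs_of_nonneg hpar1]
        exact mul_le_mul_of_nonneg_left (cl_lip u v) hpar1)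
      (fun u v => by
        rw [hσ₂ray x₂ _ _ (mul_nonneg hpar1 (cl_mem u).1) (mul_nonneg hpar1 (cl_mem v).1),
          ← mul_sub, abs_mul, abs_of_nonneg hpar1]
        exact mul_le_mul_of_nonneg_left (cl_lip u v) hpar1)
    have hend0 : (⟨(σ₁ x₁ ((B₁ x₁ - KK + (δ + 1)) * cl 0), σ₂ x₂ ((B₁ x₁ - KK + (δ + 1)) * cl 0)),
        hmem 0⟩ : {r : X₁ × X₂ // B₁ r.1 = B₂ r.2}) = ⟨(x₁, x₂), hp⟩ := by
      refine Subtype.ext (Prod.ext ?_ ?_) <;> simp only [cl_zero, mul_zero]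
      · exact hσ₁0 x₁
      · exact hσ₂0 x₂
    have hend1 : (⟨(σ₁ x₁ ((B₁ x₁ - KK + (δ + 1)) * cl 1), σ₂ x₂ ((B₁ x₁ - KK + (δ + 1)) * cl 1)),
        hmem 1⟩ : {r : X₁ × X₂ // B₁ r.1 = B₂ r.2}) = ⟨(e₁, e₂), by rw [hBe₁, hBe₂]⟩ := by
      refine Subtype.ext (Prod.ext ?_ ?_) <;> simp only [cl_one, mul_one] <;> rfl
    rwa [hend0, hend1] at hbound
  -- Segment 2 : move the first coordinate from e₁ to e₁' while the second wiggles
  have hseg2 : intDist (⟨(e₁, e₂), by rw [hBe₁, hBe₂]⟩ : {r : X₁ × X₂ // B₁ r.1 = B₂ r.2})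
      ⟨(e₁', e₂), by rw [hBe₁', hBe₂]⟩ ≤ ENNReal.ofReal (dist e₁ e₁') := by
    have hargnn : ∀ u : ℝ, 0 ≤ B₁ x₁ - B₁ (g₁ (dist e₁ e₁' * cl u)) := by
      intro u
      have := hmid₁ _ (hclmul₁ u)
      linarith
    have hmem : ∀ u : ℝ, B₁ (g₁ (dist e₁ e₁' * cl u))
        = B₂ (σ₂ x₂ (B₁ x₁ - B₁ (g₁ (dist e₁ e₁' * cl u)))) := by
      intro u
      rw [hσ₂h x₂ _ (hargnn u), ← hp]
      ring
    have hbound := pieceY (B₁ := B₁) (B₂ := B₂)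
      (fun u => g₁ (dist e₁ e₁' * cl u))
      (fun u => σ₂ x₂ (B₁ x₁ - B₁ (g₁ (dist e₁ e₁' * cl u)))) hmem hl₁pos
      (fun u v => by
        rw [hg₁.2.2 _ (hclmul₁ u) _ (hclmul₁ v), ← mul_sub, abs_mul, abs_of_nonneg hl₁pos]
        exact mul_le_mul_of_nonneg_left (cl_lip u v) hl₁pos)
      (fun u v => by
        rw [hσ₂ray x₂ _ _ (hargnn u) (hargnn v)]
        have h1 : |B₁ x₁ - B₁ (g₁ (dist e₁ e₁' * cl u)) - (B₁ x₁ - B₁ (g₁ (dist e₁ e₁' * cl v)))|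
            = |B₁ (g₁ (dist e₁ e₁' * cl v)) - B₁ (g₁ (dist e₁ e₁' * cl u))| := by
          congr 1; ring
        rw [h1]
        have h2 := bus_lip hlim₁ (g₁ (dist e₁ e₁' * cl v)) (g₁ (dist e₁ e₁' * cl u))
        have h3 : dist (g₁ (dist e₁ e₁' * cl v)) (g₁ (dist e₁ e₁' * cl u))
            = |dist e₁ e₁' * cl v - dist e₁ e₁' * cl u| :=
          hg₁.2.2 _ (hclmul₁ v) _ (hclmul₁ u)
        rw [h3] at h2
        refine h2.trans ?_
        rw [← mul_sub, abs_mul, abs_of_nonneg hl₁pos, abs_sub_comm]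
        exact mul_le_mul_of_nonneg_left (cl_lip u v) hl₁pos)
    have hend0 : (⟨(g₁ (dist e₁ e₁' * cl 0), σ₂ x₂ (B₁ x₁ - B₁ (g₁ (dist e₁ e₁' * cl 0)))),
        hmem 0⟩ : {r : X₁ × X₂ // B₁ r.1 = B₂ r.2}) = ⟨(e₁, e₂), by rw [hBe₁, hBe₂]⟩ := by
      refine Subtype.ext (Prod.ext ?_ ?_) <;> simp only [cl_zero, mul_zero]
      · exact hg₁.1
      · rw [hg₁.1, hBe₁, he₂def]
        congr 1; ring
    have hend1 : (⟨(g₁ (dist e₁ e₁' * cl 1), σ₂ x₂ (B₁ x₁ - B₁ (g₁ (dist e₁ e₁' * cl 1)))),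
        hmem 1⟩ : {r : X₁ × X₂ // B₁ r.1 = B₂ r.2}) = ⟨(e₁', e₂), by rw [hBe₁', hBe₂]⟩ := by
      refine Subtype.ext (Prod.ext ?_ ?_) <;> simp only [cl_one, mul_one]
      · exact hg₁.2.1
      · rw [hg₁.2.1, hBe₁', he₂def]
        congr 1; ring
    rwa [hend0, hend1] at hbound
  -- Segment 3 : move the second coordinate from e₂ to e₂' while the first wiggles
  have hseg3 : intDist (⟨(e₁', e₂), by rw [hBe₁', hBe₂]⟩ : {r : X₁ × X₂ // B₁ r.1 = B₂ r.2})
      ⟨(e₁', e₂'), by rw [hBe₁', hBe₂']⟩ ≤ ENNReal.ofReal (dist e₂ e₂') := by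
    have hargnn : ∀ u : ℝ, 0 ≤ B₁ y₁ - B₂ (g₂ (dist e₂ e₂' * cl u)) := by
      intro u
      have := hmid₂ _ (hclmul₂ u)
      linarith
    have hmem : ∀ u : ℝ, B₁ (σ₁ y₁ (B₁ y₁ - B₂ (g₂ (dist e₂ e₂' * cl u))))
        = B₂ (g₂ (dist e₂ e₂' * cl u)) := by
      intro u
      rw [hσ₁h y₁ _ (hargnn u)]
      ring
    have hbound := pieceY (B₁ := B₁) (B₂ := B₂)
      (fun u => σ₁ y₁ (B₁ y₁ - B₂ (g₂ (dist e₂ e₂' * cl u))))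
      (fun u => g₂ (dist e₂ e₂' * cl u)) hmem hl₂pos
      (fun u v => by
        rw [hσ₁ray y₁ _ _ (hargnn u) (hargnn v)]
        have h1 : |B₁ y₁ - B₂ (g₂ (dist e₂ e₂' * cl u)) - (B₁ y₁ - B₂ (g₂ (dist e₂ e₂' * cl v)))|
            = |B₂ (g₂ (dist e₂ e₂' * cl v)) - B₂ (g₂ (dist e₂ e₂' * cl u))| := by
          congr 1; ring
        rw [h1]
        have h2 := bus_lip hlim₂ (g₂ (dist e₂ e₂' * cl v)) (g₂ (dist e₂ e₂' * cl u))
        have h3 : dist (g₂ (dist e₂ e₂' * cl v)) (g₂ (dist e₂ e₂' * cl u))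
            = |dist e₂ e₂' * cl v - dist e₂ e₂' * cl u| :=
          hg₂.2.2 _ (hclmul₂ v) _ (hclmul₂ u)
        rw [h3] at h2
        refine h2.trans ?_
        rw [← mul_sub, abs_mul, abs_of_nonneg hl₂pos, abs_sub_comm]
        exact mul_le_mul_of_nonneg_left (cl_lip u v) hl₂pos)
      (fun u v => by
        rw [hg₂.2.2 _ (hclmul₂ u) _ (hclmul₂ v), ← mul_sub, abs_mul, abs_of_nonneg hl₂pos]
        exact mul_le_mul_of_nonneg_left (cl_lip u v) hl₂pos)
    have hend0 : (⟨(σ₁ y₁ (B₁ y₁ - B₂ (g₂ (dist e₂ e₂' * cl 0))), g₂ (dist e₂ e₂' * cl 0)),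
        hmem 0⟩ : {r : X₁ × X₂ // B₁ r.1 = B₂ r.2}) = ⟨(e₁', e₂), by rw [hBe₁', hBe₂]⟩ := by
      refine Subtype.ext (Prod.ext ?_ ?_) <;> simp only [cl_zero, mul_zero]
      · rw [hg₂.1, hBe₂, he₁'def]
        congr 1; ring
      · exact hg₂.1
    have hend1 : (⟨(σ₁ y₁ (B₁ y₁ - B₂ (g₂ (dist e₂ e₂' * cl 1))), g₂ (dist e₂ e₂' * cl 1)),
        hmem 1⟩ : {r : X₁ × X₂ // B₁ r.1 = B₂ r.2}) = ⟨(e₁', e₂'), by rw [hBe₁', hBe₂']⟩ := by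
      refine Subtype.ext (Prod.ext ?_ ?_) <;> simp only [cl_one, mul_one]
      · rw [hg₂.2.1, hBe₂', he₁'def]
        congr 1; ring
      · exact hg₂.2.1
    rwa [hend0, hend1] at hbound
  -- Segment 4 : simultaneous ascent from (e₁',e₂') to (y₁,y₂)
  have hseg4 : intDist (⟨(e₁', e₂'), by rw [hBe₁', hBe₂']⟩ : {r : X₁ × X₂ // B₁ r.1 = B₂ r.2})
      ⟨(y₁, y₂), hq⟩ ≤ ENNReal.ofReal (B₁ y₁ - KK + (δ + 1)) := by
    have hnn : ∀ u : ℝ, 0 ≤ (B₁ y₁ - KK + (δ + 1)) * (1 - cl u) := by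
      intro u
      exact mul_nonneg hpar2 (by linarith [(cl_mem u).2])
    have hmem : ∀ u : ℝ, B₁ (σ₁ y₁ ((B₁ y₁ - KK + (δ + 1)) * (1 - cl u)))
        = B₂ (σ₂ y₂ ((B₁ y₁ - KK + (δ + 1)) * (1 - cl u))) := by
      intro u
      rw [hσ₁h y₁ _ (hnn u), hσ₂h y₂ _ (hnn u), ← hq]
    have hbound := pieceY (B₁ := B₁) (B₂ := B₂)
      (fun u => σ₁ y₁ ((B₁ y₁ - KK + (δ + 1)) * (1 - cl u)))
      (fun u => σ₂ y₂ ((B₁ y₁ - KK + (δ + 1)) * (1 - cl u))) hmem hpar2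
      (fun u v => by
        rw [hσ₁ray y₁ _ _ (hnn u) (hnn v), ← mul_sub, abs_mul, abs_of_nonneg hpar2]
        have : |1 - cl u - (1 - cl v)| = |cl u - cl v| := by rw [show (1:ℝ) - cl u - (1 - cl v) = -(cl u - cl v) by ring, abs_neg]
        rw [this]
        exact mul_le_mul_of_nonneg_left (cl_lip u v) hpar2)
      (fun u v => by
        rw [hσ₂ray y₂ _ _ (hnn u) (hnn v), ← mul_sub, abs_mul, abs_of_nonneg hpar2]
        have : |1 - cl u - (1 - cl v)| = |cl u - cl v| := by rw [show (1:ℝ) - cl u - (1 - cl v) = -(cl u - cl v) by ring, abs_neg]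
        rw [this]
        exact mul_le_mul_of_nonneg_left (cl_lip u v) hpar2)
    have hend0 : (⟨(σ₁ y₁ ((B₁ y₁ - KK + (δ + 1)) * (1 - cl 0)),
        σ₂ y₂ ((B₁ y₁ - KK + (δ + 1)) * (1 - cl 0))),
        hmem 0⟩ : {r : X₁ × X₂ // B₁ r.1 = B₂ r.2}) = ⟨(e₁', e₂'), by rw [hBe₁', hBe₂']⟩ := by
      refine Subtype.ext (Prod.ext ?_ ?_) <;> simp only [cl_zero, sub_zero, mul_one] <;> rfl
    have hend1 : (⟨(σ₁ y₁ ((B₁ y₁ - KK + (δ + 1)) * (1 - cl 1)),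
        σ₂ y₂ ((B₁ y₁ - KK + (δ + 1)) * (1 - cl 1))),
        hmem 1⟩ : {r : X₁ × X₂ // B₁ r.1 = B₂ r.2}) = ⟨(y₁, y₂), hq⟩ := by
      refine Subtype.ext (Prod.ext ?_ ?_) <;> simp only [cl_one, sub_self, mul_zero]
      · exact hσ₁0 y₁
      · exact hσ₂0 y₂
    rwa [hend0, hend1] at hbound
  -- put the four segments together
  have hchain : intDist (⟨(x₁, x₂), hp⟩ : {r : X₁ × X₂ // B₁ r.1 = B₂ r.2}) ⟨(y₁, y₂), hq⟩
      ≤ ENNReal.ofReal (B₁ x₁ - KK + (δ + 1)) + ENNReal.ofReal (dist e₁ e₁')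
        + ENNReal.ofReal (dist e₂ e₂') + ENNReal.ofReal (B₁ y₁ - KK + (δ + 1)) := by
    calc intDist (⟨(x₁, x₂), hp⟩ : {r : X₁ × X₂ // B₁ r.1 = B₂ r.2}) ⟨(y₁, y₂), hq⟩
        ≤ intDist (⟨(x₁, x₂), hp⟩ : {r : X₁ × X₂ // B₁ r.1 = B₂ r.2}) ⟨(e₁, e₂), by rw [hBe₁, hBe₂]⟩
          + intDist (⟨(e₁, e₂), by rw [hBe₁, hBe₂]⟩ : {r : X₁ × X₂ // B₁ r.1 = B₂ r.2}) ⟨(y₁, y₂), hq⟩ :=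
          intDist_triangle _ _ _
      _ ≤ intDist (⟨(x₁, x₂), hp⟩ : {r : X₁ × X₂ // B₁ r.1 = B₂ r.2}) ⟨(e₁, e₂), by rw [hBe₁, hBe₂]⟩
          + (intDist (⟨(e₁, e₂), by rw [hBe₁, hBe₂]⟩ : {r : X₁ × X₂ // B₁ r.1 = B₂ r.2}) ⟨(e₁', e₂), by rw [hBe₁', hBe₂]⟩
          + intDist (⟨(e₁', e₂), by rw [hBe₁', hBe₂]⟩ : {r : X₁ × X₂ // B₁ r.1 = B₂ r.2}) ⟨(y₁, y₂), hq⟩) := by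
          gcongr
          exact intDist_triangle _ _ _
      _ ≤ intDist (⟨(x₁, x₂), hp⟩ : {r : X₁ × X₂ // B₁ r.1 = B₂ r.2}) ⟨(e₁, e₂), by rw [hBe₁, hBe₂]⟩
          + (intDist (⟨(e₁, e₂), by rw [hBe₁, hBe₂]⟩ : {r : X₁ × X₂ // B₁ r.1 = B₂ r.2}) ⟨(e₁', e₂), by rw [hBe₁', hBe₂]⟩
          + (intDist (⟨(e₁', e₂), by rw [hBe₁', hBe₂]⟩ : {r : X₁ × X₂ // B₁ r.1 = B₂ r.2}) ⟨(e₁', e₂'), by rw [hBe₁', hBe₂']⟩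
          + intDist (⟨(e₁', e₂'), by rw [hBe₁', hBe₂']⟩ : {r : X₁ × X₂ // B₁ r.1 = B₂ r.2}) ⟨(y₁, y₂), hq⟩)) := by
          gcongr
          exact intDist_triangle _ _ _
      _ ≤ ENNReal.ofReal (B₁ x₁ - KK + (δ + 1)) + (ENNReal.ofReal (dist e₁ e₁')
          + (ENNReal.ofReal (dist e₂ e₂') + ENNReal.ofReal (B₁ y₁ - KK + (δ + 1)))) := by
          gcongr
      _ = ENNReal.ofReal (B₁ x₁ - KK + (δ + 1)) + ENNReal.ofReal (dist e₁ e₁')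
          + ENNReal.ofReal (dist e₂ e₂') + ENNReal.ofReal (B₁ y₁ - KK + (δ + 1)) := by ring
  refine hchain.trans ?_
  rw [← ENNReal.ofReal_add hpar1 hl₁pos, ← ENNReal.ofReal_add (by linarith) hl₂pos,
    ← ENNReal.ofReal_add (by linarith) hpar2]
  refine ENNReal.ofReal_le_ofReal ?_
  -- the metric identity : dist p q = B₁ x₁ + B₁ y₁ - 2 * min k₁ k₂
  have hd₁ : dist x₁ y₁ = B₁ x₁ + B₁ y₁ - 2 * k₁ := by
    rw [hk₁def]; unfold kB; ring
  have hd₂ : dist x₂ y₂ = B₁ x₁ + B₁ y₁ - 2 * k₂ := by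
    rw [hk₂def]; unfold kB; rw [← hp, ← hq]; ring
  have hdist : dist (⟨(x₁, x₂), hp⟩ : {r : X₁ × X₂ // B₁ r.1 = B₂ r.2}) ⟨(y₁, y₂), hq⟩
      = B₁ x₁ + B₁ y₁ - 2 * min k₁ k₂ := by
    rw [distY_eq]
    simp only
    rw [hd₁, hd₂]
    rcases le_total k₁ k₂ with hc | hc
    · rw [min_eq_left hc, max_eq_left (by linarith)]
    · rw [min_eq_right hc, max_eq_right (by linarith)]
  rw [hdist]
  simp only [hKKdef]
  linarith

end YUpper

/-- Proposition 3: `(Y,d)` is hyperbolic; moreover there is a constant `Δ ≥ 0` depending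
only on `δ` (and not on `X₁, X₂, B₁, B₂`) such that `(Y,d)` is `Δ`-hyperbolic, where `d`
is the interior metric on `Y` induced by the maximum metric (in particular `d` is finite). -/
theorem stmt17 (δ : ℝ) (hδ : 0 ≤ δ) :
    ∃ Δ : ℝ, 0 ≤ Δ ∧
      ∀ (X₁ X₂ : Type*) [MetricSpace X₁] [MetricSpace X₂]
        [ProperSpace X₁] [ProperSpace X₂],
        GeodesicMS X₁ → GeodesicMS X₂ → DeltaHyp X₁ δ → DeltaHyp X₂ δ →
        ∀ (B₁ : X₁ → ℝ) (B₂ : X₂ → ℝ), IsBusemann B₁ → IsBusemann B₂ →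
          (∀ p q : {r : X₁ × X₂ // B₁ r.1 = B₂ r.2}, intDist p q ≠ ⊤) ∧
          DeltaHypD
            (fun p q : {r : X₁ × X₂ // B₁ r.1 = B₂ r.2} => (intDist p q).toReal) Δ := by
  refine ⟨72 * δ + 40, by linarith, ?_⟩
  intro X₁ X₂ _ _ _ _ hgeo₁ hgeo₂ hhyp₁ hhyp₂ B₁ B₂ hB₁ hB₂
  obtain ⟨γ₁, hray₁, hlim₁⟩ := hB₁
  obtain ⟨γ₂, hray₂, hlim₂⟩ := hB₂
  have hupper := Y_upper hδ hgeo₁ hgeo₂ hhyp₁ hhyp₂ hray₁ hray₂ hlim₁ hlim₂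
  have hfin : ∀ p q : {r : X₁ × X₂ // B₁ r.1 = B₂ r.2}, intDist p q ≠ ⊤ :=
    fun p q => ne_top_of_le_ne_top ENNReal.ofReal_ne_top (hupper p q)
  refine ⟨hfin, ?_⟩
  set Y := {r : X₁ × X₂ // B₁ r.1 = B₂ r.2} with hYdef
  set D : Y → Y → ℝ := fun p q => (intDist p q).toReal with hDdef
  -- basic metric properties of D
  have hDub : ∀ p q : Y, D p q ≤ dist p q + (12 * δ + 10) := by
    intro p q
    exact ENNReal.toReal_le_of_le_ofReal (by positivity) (hupper p q)
  have hDlb : ∀ p q : Y, dist p q ≤ D p q := by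
    intro p q
    rw [dist_edist]
    exact ENNReal.toReal_mono (hfin p q) (edist_le_intDist p q)
  have hDsymm : ∀ p q : Y, D p q = D q p := by
    intro p q
    simp only [hDdef]
    rw [intDist_symm]
  have hDtri : ∀ p q r : Y, D p r ≤ D p q + D q r := by
    intro p q r
    simp only [hDdef]
    rw [← ENNReal.toReal_add (hfin p q) (hfin q r)]
    exact ENNReal.toReal_mono (ENNReal.add_ne_top.mpr ⟨hfin p q, hfin q r⟩) (intDist_triangle p q r)
  have hD0 : ∀ p q : Y, 0 ≤ D p q := fun p q => ENNReal.toReal_nonneg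
  -- the tree-like function K on Y
  set KY : Y → Y → ℝ := fun p q => min (kB B₁ p.1.1 q.1.1) (kB B₂ p.1.2 q.1.2) with hKYdef
  have hkcomm₁ : ∀ a b : X₁, kB B₁ a b = kB B₁ b a := by
    intro a b; unfold kB; rw [dist_comm]; ring
  have hkcomm₂ : ∀ a b : X₂, kB B₂ a b = kB B₂ b a := by
    intro a b; unfold kB; rw [dist_comm]; ring
  have hKcomm : ∀ p q : Y, KY p q = KY q p := by
    intro p q; simp only [hKYdef]; rw [hkcomm₁, hkcomm₂]
  have hKtriple : ∀ a b c : Y, min (KY a b) (KY b c) - 3 * δ ≤ KY a c := by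
    intro a b c
    simp only [hKYdef]
    refine le_min ?_ ?_
    · have h1 := kB_min hlim₁ hgeo₁ hhyp₁ a.1.1 b.1.1 c.1.1
      have h2 : min (min (kB B₁ a.1.1 b.1.1) (kB B₂ a.1.2 b.1.2))
            (min (kB B₁ b.1.1 c.1.1) (kB B₂ b.1.2 c.1.2))
          ≤ min (kB B₁ a.1.1 b.1.1) (kB B₁ b.1.1 c.1.1) :=
        min_le_min (min_le_left _ _) (min_le_left _ _)
      linarith
    · have h1 := kB_min hlim₂ hgeo₂ hhyp₂ a.1.2 b.1.2 c.1.2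
      have h2 : min (min (kB B₁ a.1.1 b.1.1) (kB B₂ a.1.2 b.1.2))
            (min (kB B₁ b.1.1 c.1.1) (kB B₂ b.1.2 c.1.2))
          ≤ min (kB B₂ a.1.2 b.1.2) (kB B₂ b.1.2 c.1.2) :=
        min_le_min (min_le_right _ _) (min_le_right _ _)
      linarith
  -- the metric identity on Y
  have hHid : ∀ p q : Y, dist p q = B₁ p.1.1 + B₁ q.1.1 - 2 * KY p q := by
    intro p q
    rw [distY_eq]
    have hd₁ : dist p.1.1 q.1.1 = B₁ p.1.1 + B₁ q.1.1 - 2 * kB B₁ p.1.1 q.1.1 := by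
      unfold kB; ring
    have hd₂ : dist p.1.2 q.1.2 = B₁ p.1.1 + B₁ q.1.1 - 2 * kB B₂ p.1.2 q.1.2 := by
      unfold kB; rw [← p.2, ← q.2]; ring
    rw [hd₁, hd₂]
    simp only [hKYdef]
    rcases le_total (kB B₁ p.1.1 q.1.1) (kB B₂ p.1.2 q.1.2) with hc | hc
    · rw [min_eq_left hc, max_eq_left (by linarith)]
    · rw [min_eq_right hc, max_eq_right (by linarith)]
  -- four point condition for the max metric on Y
  have hdm4pt : ∀ p q r s : Y,
      dist p q + dist r s ≤ max (dist p r + dist q s) (dist p s + dist q r) + 12 * δ := by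
    intro p q r s
    have h4 := four_pt_of_triple (a := KY p r) (b := KY q s) (c := KY p s) (d := KY q r)
      (x := KY p q) (y := KY r s) (ε := 3 * δ)
      (by have := hKtriple p r q; rw [hKcomm r q] at this; linarith)
      (by have := hKtriple p s q; rw [hKcomm s q, min_comm (KY p s) (KY q s)] at this; linarith)
      (by have := hKtriple r p s; rw [hKcomm r p] at this; linarith)
      (by have := hKtriple r q s; rw [hKcomm r q, min_comm (KY q r) (KY q s)] at this; linarith)
    rw [hHid p q, hHid r s, hHid p r, hHid q s, hHid p s, hHid q r]
    rcases le_total (KY p r + KY q s) (KY p s + KY q r) with hc | hc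
    · rw [min_eq_left hc] at h4
      rw [max_eq_left (by linarith)]
      linarith
    · rw [min_eq_right hc] at h4
      rw [max_eq_right (by linarith)]
      linarith
  -- four point condition for D
  have hD4pt : ∀ p q r s : Y,
      D p q + D r s ≤ max (D p r + D q s) (D p s + D q r) + (36 * δ + 20) := by
    intro p q r s
    have h1 := hdm4pt p q r s
    have h2 : max (dist p r + dist q s) (dist p s + dist q r)
        ≤ max (D p r + D q s) (D p s + D q r) :=
      max_le_max (add_le_add (hDlb p r) (hDlb q s)) (add_le_add (hDlb p s) (hDlb q r))
    have h3 := hDub p q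
    have h4 := hDub r s
    linarith
  -- Gromov product inequality for D (at any basepoint)
  have hprod : ∀ w u m v : Y,
      min ((D u w + D m w - D u m) / 2) ((D m w + D v w - D m v) / 2) - (18 * δ + 10)
        ≤ (D u w + D v w - D u v) / 2 := by
    intro w u m v
    have h := hD4pt u v m w
    rcases le_total (D u m + D v w) (D u w + D v m) with hc | hc
    · rw [max_eq_right hc] at h
      have hsym : D v m = D m v := hDsymm v m
      have := min_le_right ((D u w + D m w - D u m) / 2) ((D m w + D v w - D m v) / 2)
      linarith
    · rw [max_eq_left hc] at h
      have := min_le_left ((D u w + D m w - D u m) / 2) ((D m w + D v w - D m v) / 2)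
      linarith
  -- final slim triangle argument
  intro x y z gxy gxz gyz hxy hxz hyz s hs

  set δs : ℝ := 18 * δ + 10 with hδsdef
  have hδs : 0 ≤ δs := by simp only [hδsdef]; linarith
  have hDxynn : (0:ℝ) ≤ D x y := hD0 x y
  have hDxznn : (0:ℝ) ≤ D x z := hD0 x z
  -- exactness along the geodesics
  have hexact : ∀ (g : ℝ → Y) (a b : Y), IsGeodSegmentD D g a b →
      ∀ r ∈ Set.Icc (0:ℝ) (D a b), D a (g r) = r ∧ D (g r) a = r ∧
        D (g r) b = D a b - r ∧ D b (g r) = D a b - r := by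
    intro g a b hg r hr
    have h1 := hg.2.2 0 ⟨le_rfl, hD0 a b⟩ r hr
    have h2 := hg.2.2 r hr 0 ⟨le_rfl, hD0 a b⟩
    have h3 := hg.2.2 r hr (D a b) ⟨hD0 a b, le_rfl⟩
    have h4 := hg.2.2 (D a b) ⟨hD0 a b, le_rfl⟩ r hr
    rw [hg.1] at h1 h2
    rw [hg.2.1] at h3 h4
    refine ⟨?_, ?_, ?_, ?_⟩
    · rw [h1, abs_of_nonpos (by linarith [hr.1])]; ring
    · rw [h2, abs_of_nonneg (by linarith [hr.1])]; ring
    · rw [h3, abs_of_nonpos (by linarith [hr.2])]; ring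
    · rw [h4, abs_of_nonneg (by linarith [hr.2])]
  obtain ⟨hxw, hwx, hwy, hyw⟩ := hexact gxy x y hxy s hs
  have hsymyx : D y x = D x y := hDsymm y x
  have hsymzx : D z x = D x z := hDsymm z x
  have hsymzy : D z y = D y z := hDsymm z y
  have htri1 : D x y ≤ D x z + D z y := hDtri x z y
  have htri2 : D y z ≤ D y x + D x z := hDtri y x z
  rcases le_total s ((D x y + D x z - D y z) / 2) with hc | hc
  · -- compare with the point on [x,z]
    have hsxz : s ∈ Set.Icc (0:ℝ) (D x z) := ⟨hs.1, by linarith⟩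
    obtain ⟨hxw', hw'x, hw'z, hzw'⟩ := hexact gxz x z hxz s hsxz
    refine ⟨gxz s, Or.inl ⟨s, hsxz, rfl⟩, ?_⟩
    have hA := hprod x (gxy s) y (gxz s)
    have hB := hprod x y z (gxz s)
    have hmin2 : s ≤ min ((D y x + D z x - D y z) / 2) ((D z x + D (gxz s) x - D z (gxz s)) / 2) := by
      refine le_min (by linarith) (by linarith [hDsymm z (gxz s)])
    have hyw' : s - δs ≤ (D y x + D (gxz s) x - D y (gxz s)) / 2 := by linarith
    have hmin1 : s - δs ≤ min ((D (gxy s) x + D y x - D (gxy s) y) / 2)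
        ((D y x + D (gxz s) x - D y (gxz s)) / 2) :=
      le_min (by linarith) hyw'
    have hfinal : s - 2 * δs ≤ (D (gxy s) x + D (gxz s) x - D (gxy s) (gxz s)) / 2 := by
      linarith
    simp only [hδsdef] at hfinal
    linarith
  · -- compare with the point on [y,z]
    set u' := D x y - s with hu'def
    have hu'nn : 0 ≤ u' := by simp only [hu'def]; linarith [hs.2]
    have hu'le : u' ≤ D y z := by simp only [hu'def]; linarith
    have hsyz : u' ∈ Set.Icc (0:ℝ) (D y z) := ⟨hu'nn, hu'le⟩
    obtain ⟨hyw', hw'y, hw'z, hzw'⟩ := hexact gyz y z hyz u' hsyz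
    refine ⟨gyz u', Or.inr ⟨u', hsyz, rfl⟩, ?_⟩
    have hA := hprod y (gxy s) x (gyz u')
    have hB := hprod y x z (gyz u')
    have hmin2 : u' ≤ min ((D x y + D z y - D x z) / 2) ((D z y + D (gyz u') y - D z (gyz u')) / 2) := by
      refine le_min (by simp only [hu'def]; linarith) (by linarith [hDsymm z (gyz u')])
    have hxw'2 : u' - δs ≤ (D x y + D (gyz u') y - D x (gyz u')) / 2 := by linarith
    have hmin1 : u' - δs ≤ min ((D (gxy s) y + D x y - D (gxy s) x) / 2)
        ((D x y + D (gyz u') y - D x (gyz u')) / 2) :=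
      le_min (by linarith) hxw'2
    have hfinal : u' - 2 * δs ≤ (D (gxy s) y + D (gyz u') y - D (gxy s) (gyz u')) / 2 := by
      linarith
    simp only [hδsdef] at hfinal
    linarith
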